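/- Let G be a Lie group and L_d : G × G → ℝ a smooth function invariant under the diagonal left action of G. Define l_d(W) = L_d(e, W). Then for all g₀, g₁ ∈ G with W = g₀⁻¹g₁, the pre-momentum p⁻ = −D₁L_d(g₀,g₁) ∈ T*_{g₀}G and post-momentum p⁺ = D₂L_d(g₀,g₁) ∈ T*_{g₁}G are related by p⁺ = R*_{W⁻¹} p⁻, where R*_{W⁻¹} is the pullback along right multiplication by W⁻¹. -/

import Mathlib

open Manifold

/-- Let `G` be a Lie group and `L_d : G × G → ℝ` smooth and invariant
under the diagonal left action.  Then for `W = g₀⁻¹ g₁`, the pre-momentum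
`p⁻ = -D₁L_d(g₀,g₁) ∈ T*_{g₀}G` and post-momentum `p⁺ = D₂L_d(g₀,g₁) ∈ T*_{g₁}G`
are related by `p⁺ = R*_{W⁻¹} p⁻`, i.e. for every tangent vector `v ∈ T_{g₁}G`,
`p⁺(v) = p⁻(d(R_{W⁻¹})_{g₁} v)` where `R_{W⁻¹}` is right multiplication by `W⁻¹`. -/
theorem post_momentum_is_right_translate_of_pre_momentum
    {E : Type*} [NormedAddCommGroup E] [NormedSpace ℝ E]
    {H : Type*} [TopologicalSpace H] (I : ModelWithCorners ℝ E H)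
    {G : Type*} [TopologicalSpace G] [ChartedSpace H G] [Group G] [LieGroup I (⊤ : ℕ∞) G]
    (Ld : G → G → ℝ)
    (hLd : ContMDiff (I.prod I) 𝓘(ℝ, ℝ) (⊤ : ℕ∞) (fun p : G × G => Ld p.1 p.2))
    (hinv : ∀ g h k : G, Ld (g * h) (g * k) = Ld h k)
    (g₀ g₁ : G) (v : TangentSpace I g₁) :
    mfderiv I 𝓘(ℝ, ℝ) (fun g => Ld g₀ g) g₁ v
      = -(mfderiv I 𝓘(ℝ, ℝ) (fun g => Ld g g₁) g₀
            (mfderiv I I (fun g => g * (g₀⁻¹ * g₁)⁻¹) g₁ v)) := by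
  set W : G := g₀⁻¹ * g₁ with hW
  set r : G → G := fun g => g * W⁻¹ with hr
  have hr₁ : r g₁ = g₀ := by simp [hr, hW, mul_assoc]
  have hrsmooth : ContMDiff I I (⊤ : ℕ∞) r := contMDiff_id.mul contMDiff_const
  have hφ : ContMDiff I (I.prod I) (⊤ : ℕ∞) (fun g => (r g, g)) :=
    hrsmooth.prodMk contMDiff_id
  have hconst : (fun g => Ld (r g) g) = fun _ => Ld 1 W := by
    funext g
    rw [← hinv (g * W⁻¹) 1 W]
    simp [hr, hW, mul_assoc]
  have hF : MDifferentiableAt (I.prod I) 𝓘(ℝ, ℝ) (fun p : G × G => Ld p.1 p.2)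
      ((g₀ : G), g₁) := (hLd (g₀, g₁)).mdifferentiableAt (by simp)
  have h0 : mfderiv I 𝓘(ℝ, ℝ) (fun g => Ld (r g) g) g₁ v = 0 := by
    rw [hconst, mfderiv_const]; rfl
  have hcomp : mfderiv I 𝓘(ℝ, ℝ) (fun g => Ld (r g) g) g₁ v
      = mfderiv (I.prod I) 𝓘(ℝ, ℝ) (fun p : G × G => Ld p.1 p.2) (g₀, g₁)
          (mfderiv I (I.prod I) (fun g => (r g, g)) g₁ v) := by
    have hc := mfderiv_comp_of_eq (I' := I.prod I)
      (f := fun g : G => (r g, g)) (g := fun p : G × G => Ld p.1 p.2) (x := g₁)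
      (y := (g₀, g₁)) hF ((hφ g₁).mdifferentiableAt (by simp)) (by simp [hr₁])
    rw [show (fun g => Ld (r g) g) = (fun p : G × G => Ld p.1 p.2) ∘ (fun g => (r g, g))
      from rfl, hc]
    beta_reduce
    rw [hr₁]
    rfl
  have hφd : mfderiv I (I.prod I) (fun g => (r g, g)) g₁ v
      = (mfderiv I I r g₁ v, v) := by
    have h := ((hrsmooth g₁).mdifferentiableAt (by simp)).mfderiv_prod
      ((contMDiff_id (I := I) (n := 1) g₁).mdifferentiableAt one_ne_zero)
    rw [mfderiv_id] at h
    show mfderiv I (I.prod I) (fun g => (r g, id g)) g₁ v = _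
    rw [h]; rfl
  erw [hcomp, hφd, mfderiv_prod_eq_add_apply hF] at h0
  simp only at h0
  exact eq_neg_of_add_eq_zero_right h0
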